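/- If the true causal DAG G satisfies the Causal Markov and Triangle-Faithfulness assumptions with respect to a perfect oracle, X and Y are adjacent in G, Y and Z are adjacent in G, and X and Z are not independent conditional on any subset of V \ {X, Z} that contains Y, then in G either X and Z are adjacent as part of a triangle with noncollider Y, or (X, Y, Z) forms a collider (edges into Y). -/

import Mathlib

/-- A directed acyclic graph on vertex set `V`. -/
structure DAG (V : Type*) where
  Edge : V → V → Prop
  acyclic : ∀ x, ¬ Relation.TransGen Edge x x

namespace DAG

variable {V : Type*} (G : DAG V)

/-- `x` and `y` are adjacent: there is an edge between them in either direction. -/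
def Adj (x y : V) : Prop := G.Edge x y ∨ G.Edge y x

/-- `y` is a descendant of `x` (`x` is an ancestor of `y`); reflexive. -/
def Desc (x y : V) : Prop := Relation.ReflTransGen G.Edge x y

/-- The parents of `v`. -/
def Parents (v : V) : Set V := {u | G.Edge u v}

/-- The vertices that are neither parents nor descendants of `v`. -/
def NonDescNonPar (v : V) : Set V := {u | ¬ G.Desc v u ∧ ¬ G.Edge u v}

/-- `b` is a collider on the path `p`: `p` contains a consecutive subsequence
`a, b, c` with both edges pointing into `b`. -/
def ColliderOn (p : List V) (b : V) : Prop :=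
  ∃ a c, [a, b, c] <:+: p ∧ G.Edge a b ∧ G.Edge c b

/-- `b` is active on the path `p` between `x` and `y` conditional on `Z`:
it is an endpoint, or a noncollider not in `Z`, or a collider that is in `Z`
or has a descendant in `Z`. -/
def ActiveOn (p : List V) (x y : V) (Z : Set V) (b : V) : Prop :=
  b = x ∨ b = y ∨
    (¬ G.ColliderOn p b ∧ b ∉ Z) ∨
    (G.ColliderOn p b ∧ ∃ d ∈ Z, G.Desc b d)

/-- `p` is an acyclic path between `x` and `y`, every vertex of which is
active conditional on `Z`. -/
def ActivePath (p : List V) (x y : V) (Z : Set V) : Prop :=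
  p.Nodup ∧ 2 ≤ p.length ∧ p.Chain' G.Adj ∧
    p.head? = some x ∧ p.getLast? = some y ∧
    ∀ b ∈ p, G.ActiveOn p x y Z b

/-- `x` is d-separated from `y` conditional on `Z`: there is no active acyclic
path between `x` and `y` conditional on `Z`. -/
def DSep (x y : V) (Z : Set V) : Prop := ¬ ∃ p : List V, G.ActivePath p x y Z

/-- `(x, y, z)` is an unshielded collider. -/
def UnshieldedCollider (x y z : V) : Prop :=
  G.Edge x y ∧ G.Edge z y ∧ ¬ G.Adj x z

/-- `(x, y, z)` is an unshielded noncollider. -/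
def UnshieldedNoncollider (x y z : V) : Prop :=
  G.Adj x y ∧ G.Adj y z ∧ ¬ G.Adj x z ∧ ¬ (G.Edge x y ∧ G.Edge z y)

end DAG

/-- The Triangle-Faithfulness assumption (pairwise oracle form). -/
def TriangleFaithful {V : Type*} (G : DAG V) (CI : V → V → Set V → Prop) : Prop :=
  ∀ x y z : V, G.Adj x y → G.Adj y z → G.Adj x z →
    ((¬ (G.Edge x y ∧ G.Edge z y) →
        ∀ S : Set V, x ∉ S → z ∉ S → y ∉ S → ¬ CI x z S) ∧
     ((G.Edge x y ∧ G.Edge z y) →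
        ∀ S : Set V, x ∉ S → z ∉ S → y ∈ S → ¬ CI x z S))

namespace DAG

variable {V : Type*} {G : DAG V}

lemma not_edge_self (a : V) : ¬ G.Edge a a :=
  fun h => G.acyclic a (Relation.TransGen.single h)

lemma no_two_cycle {a b : V} (h1 : G.Edge a b) (h2 : G.Edge b a) : False :=
  G.acyclic a ((Relation.TransGen.single h1).tail h2)

lemma desc_asymm {a b : V} (h1 : G.Desc a b) (h2 : G.Desc b a) (hne : a ≠ b) : False := by
  rcases Relation.reflTransGen_iff_eq_or_transGen.mp h1 with rfl | ht
  · exact hne rfl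
  · exact G.acyclic a (ht.trans_left h2)

/-- in a nodup list starting `w :: b :: r`, the predecessor of `b` in any
consecutive triple is `w`. -/
lemma pred_unique {p : List V} (hnd : p.Nodup) {w b : V} {r : List V}
    (hp : p = w :: b :: r) {a c : V} (h : [a, b, c] <:+: p) : a = w := by
  obtain ⟨s, t, hst⟩ := h
  subst hp
  match s with
  | [] =>
    simp only [List.nil_append, List.cons_append] at hst
    exact (List.cons.injEq .. ▸ hst).1.symm ▸ rfl
  | s0 :: s' =>
    exfalso
    simp only [List.cons_append, List.cons.injEq] at hst
    obtain ⟨rfl, hst⟩ := hst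
    have hbr : b ∈ r := by
      match s' with
      | [] =>
        simp only [List.nil_append, List.cons_append, List.cons.injEq] at hst
        obtain ⟨rfl, hr⟩ := hst
        rw [← hr]; simp
      | s1 :: s'' =>
        simp only [List.cons_append, List.cons.injEq] at hst
        obtain ⟨rfl, hr⟩ := hst
        rw [← hr]; simp
    have : b ∉ r := (List.nodup_cons.mp (List.nodup_cons.mp hnd).2).1
    exact this hbr

/-- Key lemma: walking down a descending active path, conditioning on parents
of `w`, we must end at a descendant of `w`. -/
lemma aux_desc {p : List V} {w u : V} {Z : Set V}
    (hZ : ∀ d ∈ Z, G.Edge d w)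
    (hnd : p.Nodup) (hch : p.Chain' G.Adj) (hh : p.head? = some w)
    (hl : p.getLast? = some u) (hact : ∀ b ∈ p, G.ActiveOn p w u Z b) :
    ∀ (l : List V) (a b : V), (a :: b :: l) <:+ p → G.Edge a b → G.Desc w b →
      G.Desc w u := by
  intro l
  induction l with
  | nil =>
    intro a b hsuf _ hwb
    have : (a :: b :: ([] : List V)).getLast? = some u := by
      obtain ⟨s, hs⟩ := hsuf
      rw [← hl, ← hs, List.getLast?_append]
      rfl
    simp at this
    exact this ▸ hwb
  | cons c l ih =>
    intro a b hsuf hab hwb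
    -- b is a middle vertex
    obtain ⟨s, hs⟩ := hsuf
    have hbp : b ∈ p := by rw [← hs]; simp
    have hsubnd : (a :: b :: c :: l).Nodup := (List.IsSuffix.sublist ⟨s, hs⟩).nodup hnd
    have hbnotin : b ∉ c :: l := by
      have := (List.nodup_cons.mp (List.nodup_cons.mp hsubnd).2).1
      simpa using this
    -- b ≠ w
    obtain ⟨t, rfl⟩ : ∃ t, p = w :: t := by
      cases p with
      | nil => simp at hh
      | cons h t => simp at hh; exact ⟨t, by rw [hh]⟩
    have hbt : b ∈ t := by
      match s, hs with
      | [], hs =>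
        simp only [List.nil_append, List.cons.injEq] at hs
        rw [← hs.2]; simp
      | s0 :: s', hs =>
        simp only [List.cons_append, List.cons.injEq] at hs
        rw [← hs.2]; simp
    have hbw : b ≠ w := fun hbw => (List.nodup_cons.mp hnd).1 (hbw ▸ hbt)
    -- b ≠ u
    have hbu : b ≠ u := by
      intro hbequ
      have hgl : (a :: b :: c :: l).getLast? = some u := by
        rw [← hl, ← hs, List.getLast?_append]; rfl
      have hmem : u ∈ c :: l := by
        have h2 : (c :: l).getLast? = some u := by simpa using hgl
        exact List.mem_of_mem_getLast? h2
      exact hbnotin (hbequ ▸ hmem)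
    -- the triple [a,b,c] is an infix of p
    have hinf : [a, b, c] <:+: (w :: t) := by
      refine ⟨s, l, ?_⟩
      simpa using hs
    rcases hact b hbp with rfl | rfl | ⟨hnc, hbZ⟩ | ⟨_, d, hdZ, hbd⟩
    · exact absurd rfl hbw
    · exact absurd rfl hbu
    · -- noncollider: edge must continue forward
      have hchsub : (a :: b :: c :: l).Chain' G.Adj := hch.infix ⟨s, [], by simpa using hs⟩
      have hadjbc : G.Adj b c := (List.isChain_cons_cons.mp (List.isChain_cons_cons.mp hchsub).2).1
      have hbc : G.Edge b c := by
        rcases hadjbc with h | h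
        · exact h
        · exact absurd ⟨a, c, hinf, hab, h⟩ hnc
      exact ih b c ⟨s ++ [a], by simpa using hs⟩ hbc (hwb.tail hbc)
    · -- collider with descendant in Z: cycle
      exact absurd (Relation.TransGen.tail' (hwb.trans hbd) (hZ d hdZ)) (G.acyclic w)

lemma dsep_parents (w u : V) (hdesc : ¬ G.Desc w u) (hwu : ¬ G.Edge u w) :
    G.DSep w u (G.Parents w) := by
  rintro ⟨p, hnd, hlen, hch, hh, hl, hact⟩
  obtain ⟨b1, r, rfl⟩ : ∃ b1 r, p = w :: b1 :: r := by
    match p, hh, hlen with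
    | [x], hh, hlen => simp at hlen
    | x :: b :: r, hh, _ => simp at hh; exact ⟨b, r, by rw [hh]⟩
  have hadj : G.Adj w b1 := (List.isChain_cons_cons.mp hch).1
  rcases hadj with hwb | hbw
  · exact hdesc (DAG.aux_desc (fun d hd => hd) hnd hch hh hl hact r w b1
      (List.suffix_refl _) hwb (Relation.ReflTransGen.single hwb))
  · -- b1 is a parent of w, hence in Z; it cannot be active
    have hb1w : b1 ≠ w := by
      intro h
      exact (List.nodup_cons.mp hnd).1 (by simp [h])
    have hb1u : b1 ≠ u := fun h => hwu (h ▸ hbw)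
    rcases hact b1 (by simp) with h | h | ⟨_, hbZ⟩ | ⟨⟨a, c, hinf, hab, _⟩, _⟩
    · exact hb1w h
    · exact hb1u h
    · exact hbZ hbw
    · have : a = w := DAG.pred_unique hnd rfl hinf
      exact DAG.no_two_cycle (this ▸ hab) hbw

lemma infix_reverse {l p : List V} (h : l <:+: p) : l.reverse <:+: p.reverse :=
  List.reverse_infix.mpr h

lemma colliderOn_reverse' {p : List V} {b : V}
    (h : G.ColliderOn p b) : G.ColliderOn p.reverse b := by
  obtain ⟨a, c, hinf, hab, hcb⟩ := h
  exact ⟨c, a, by simpa using infix_reverse hinf, hcb, hab⟩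

lemma colliderOn_reverse_iff {p : List V} {b : V} :
    G.ColliderOn p.reverse b ↔ G.ColliderOn p b := by
  constructor
  · intro h
    have := DAG.colliderOn_reverse' (p := p.reverse) h
    simpa using this
  · exact DAG.colliderOn_reverse'

lemma activePath_reverse {p : List V} {x y : V} {Z : Set V}
    (h : G.ActivePath p x y Z) : G.ActivePath p.reverse y x Z := by
  obtain ⟨hnd, hlen, hch, hh, hl, hact⟩ := h
  refine ⟨by simpa using hnd, by simpa using hlen, ?_, by simpa using hl,
    by simpa using hh, ?_⟩
  · show List.IsChain _ _
    rw [List.isChain_reverse]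
    exact hch.imp fun a b hab => hab.symm
  · intro b hb
    have hb' : b ∈ p := by simpa using hb
    rcases hact b hb' with rfl | rfl | ⟨hnc, hbZ⟩ | ⟨hc, hd⟩
    · exact Or.inr (Or.inl rfl)
    · exact Or.inl rfl
    · exact Or.inr (Or.inr (Or.inl ⟨fun hc => hnc (DAG.colliderOn_reverse_iff.mp hc), hbZ⟩))
    · exact Or.inr (Or.inr (Or.inr ⟨DAG.colliderOn_reverse_iff.mpr hc, hd⟩))

lemma dsep_symm {x y : V} {Z : Set V} (h : G.DSep x y Z) : G.DSep y x Z := by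
  rintro ⟨p, hp⟩
  exact h ⟨p.reverse, DAG.activePath_reverse hp⟩

end DAG

/-- If the true causal DAG `G` satisfies the Causal Markov and
Triangle-Faithfulness assumptions with respect to a perfect oracle, `x` is adjacent to
`y`, `y` is adjacent to `z`, and `x` and `z` are not independent conditional on any
subset of the remaining variables that contains `y`, then either `x` and `z` are
adjacent as part of a triangle with noncollider `y`, or `(x, y, z)` is a collider. -/
theorem collider_orientation_sound
    {V : Type*} [Fintype V] [DecidableEq V] (G : DAG V)
    (CI : V → V → Set V → Prop)
    (hMarkov : ∀ (x y : V) (Z : Set V), G.DSep x y Z → CI x y Z)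
    (hTF : TriangleFaithful G CI)
    (x y z : V) (hxy : G.Adj x y) (hyz : G.Adj y z) (hxz : x ≠ z)
    (hdep : ∀ S : Set V, x ∉ S → z ∉ S → y ∈ S → ¬ CI x z S) :
    (G.Adj x z ∧ ¬ (G.Edge x y ∧ G.Edge z y)) ∨ (G.Edge x y ∧ G.Edge z y) := by
  by_cases hcol : G.Edge x y ∧ G.Edge z y
  · exact Or.inr hcol
  by_cases hadj : G.Adj x z
  · exact Or.inl ⟨hadj, hcol⟩
  exfalso
  have hnxz : ¬ G.Edge x z := fun h => hadj (Or.inl h)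
  have hnzx : ¬ G.Edge z x := fun h => hadj (Or.inr h)
  by_cases hdxz : G.Desc x z
  · -- z is a descendant of x: condition on the parents of z
    have hndzx : ¬ G.Desc z x := fun h => DAG.desc_asymm hdxz h hxz
    have hyz' : G.Edge y z := by
      rcases hyz with h | h
      · exact h
      · exfalso
        have hyx : G.Edge y x := by
          rcases hxy with h' | h'
          · exact absurd ⟨h', h⟩ hcol
          · exact h'
        exact hndzx ((Relation.ReflTransGen.single h).tail hyx)
    have := hMarkov x z (G.Parents z) (DAG.dsep_symm (DAG.dsep_parents z x hndzx hnxz))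
    exact hdep (G.Parents z) hnxz (DAG.not_edge_self z) hyz' this
  · -- z is not a descendant of x: condition on the parents of x
    have hyx : G.Edge y x := by
      rcases hxy with h | h
      · exfalso
        have hyz' : G.Edge y z := by
          rcases hyz with h' | h'
          · exact h'
          · exact absurd ⟨h, h'⟩ hcol
        exact hdxz ((Relation.ReflTransGen.single h).tail hyz')
      · exact h
    have := hMarkov x z (G.Parents x) (DAG.dsep_parents x z hdxz hnzx)
    exact hdep (G.Parents x) (DAG.not_edge_self x) hnzx hyx this
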